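/- Let α ∈ ℝ with 1 < α < 2, let q₀ > 0, and let S ⊆ ℂ be a closed set consisting only of isolated points with S ⊆ {z ∈ ℂ : Re z ≥ q₀}. Then there is no function h : ℂ → ℂ that is complex-differentiable at every point of ℂ ∖ S and satisfies h(η) = (-η)^{1/α} for every η ∈ ℂ with Re η < 0, where w^{1/α} denotes the principal branch of the complex power. -/

import Mathlib

open Complex Set Metric


/-- Non-continuation fact from the First Step of the proof of Theorem 1: there is no
function holomorphic outside a closed discrete set `S ⊆ {Re z ≥ q₀}` (with `q₀ > 0`)
agreeing with the principal branch of `(-η)^{1/α}` on the half-plane `{Re η < 0}`. -/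
theorem stmt_3 (α : ℝ) (hα1 : 1 < α) (hα2 : α < 2) (q₀ : ℝ) (hq₀ : 0 < q₀)
    (S : Set ℂ) (hSclosed : IsClosed S)
    (hSdisc : ∀ s ∈ S, ∃ U ∈ nhds s, U ∩ S = {s})
    (hSre : S ⊆ {z : ℂ | q₀ ≤ z.re}) :
    ¬ ∃ h : ℂ → ℂ, (∀ z ∉ S, DifferentiableAt ℂ h z) ∧
      (∀ η : ℂ, η.re < 0 → h η = (-η) ^ ((1 / α : ℝ) : ℂ)) := by
  rintro ⟨h, hdiff, hval⟩
  set c : ℂ := ((1 / α : ℝ) : ℂ) with hc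
  -- The disk D is disjoint from S
  set D : Set ℂ := Metric.ball (0 : ℂ) q₀ with hD
  have hDS : ∀ z ∈ D, z ∉ S := by
    intro z hz hzS
    have h1 : q₀ ≤ z.re := hSre hzS
    have h2 : ‖z‖ < q₀ := by
      have := mem_ball_zero_iff.mp hz
      simpa using this
    have := Complex.re_le_norm z
    linarith
  -- h is analytic on D
  have hAnaD : AnalyticOnNhd ℂ h D :=
    (DifferentiableOn.analyticOnNhd
      (fun z hz => (hdiff z (hDS z hz)).differentiableWithinAt) Metric.isOpen_ball)
  -- key pointwise identities
  have keyU : ∀ η : ℂ, 0 < η.im → (-η) ^ c = η ^ c * Complex.exp (-(Real.pi * I * c)) := by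
    intro η him
    have hη : η ≠ 0 := fun h0 => by simp [h0] at him
    have hlog : Complex.log (-η) = Complex.log η - Real.pi * I := by
      apply Complex.ext <;>
        simp [Complex.log_re, Complex.log_im, arg_neg_eq_arg_sub_pi_of_im_pos him, norm_neg]
    rw [Complex.cpow_def_of_ne_zero (neg_ne_zero.mpr hη), Complex.cpow_def_of_ne_zero hη,
      hlog, sub_mul, Complex.exp_sub, div_eq_mul_inv, ← Complex.exp_neg]
  have keyL : ∀ η : ℂ, η.im < 0 → (-η) ^ c = η ^ c * Complex.exp (Real.pi * I * c) := by
    intro η him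
    have hη : η ≠ 0 := fun h0 => by simp [h0] at him
    have hlog : Complex.log (-η) = Complex.log η + Real.pi * I := by
      apply Complex.ext <;>
        simp [Complex.log_re, Complex.log_im, arg_neg_eq_arg_add_pi_of_im_neg him, norm_neg]
    rw [Complex.cpow_def_of_ne_zero (neg_ne_zero.mpr hη), Complex.cpow_def_of_ne_zero hη,
      hlog, add_mul, Complex.exp_add]
  -- auxiliary analytic functions
  set Gm : ℂ → ℂ := fun z => z ^ c * Complex.exp (-(Real.pi * I * c)) with hGm
  set Gp : ℂ → ℂ := fun z => z ^ c * Complex.exp (Real.pi * I * c) with hGp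
  have hGana : ∀ (e : ℂ) (U : Set ℂ), (∀ z ∈ U, z ∈ Complex.slitPlane) →
      AnalyticOnNhd ℂ (fun z => z ^ c * Complex.exp e) U := by
    intro e U hU z hz
    exact (((analyticAt_id).cpow analyticAt_const (hU z hz)).mul analyticAt_const)
  -- half-ball domains
  set Up : Set ℂ := {z : ℂ | 0 < z.im} ∩ D with hUp
  set Lo : Set ℂ := {z : ℂ | z.im < 0} ∩ D with hLo
  set Ri : Set ℂ := {z : ℂ | 0 < z.re} ∩ D with hRi
  have hUpOpen : IsOpen Up := (isOpen_lt continuous_const Complex.continuous_im).inter isOpen_ball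
  have hLoOpen : IsOpen Lo := (isOpen_lt Complex.continuous_im continuous_const).inter isOpen_ball
  have hRiOpen : IsOpen Ri := (isOpen_lt continuous_const Complex.continuous_re).inter isOpen_ball
  have hUpConn : IsPreconnected Up :=
    ((convex_halfSpace_im_gt 0).inter (convex_ball _ _)).isPreconnected
  have hLoConn : IsPreconnected Lo :=
    ((convex_halfSpace_im_lt 0).inter (convex_ball _ _)).isPreconnected
  have hRiConn : IsPreconnected Ri :=
    ((convex_halfSpace_re_gt 0).inter (convex_ball _ _)).isPreconnected
  -- base points
  have hmem : ∀ a b : ℝ, |a| < q₀ / 2 → |b| < q₀ / 2 → (⟨a, b⟩ : ℂ) ∈ D := by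
    intro a b ha hb
    simp only [hD, Metric.mem_ball, Complex.dist_eq, sub_zero]
    calc ‖(⟨a, b⟩ : ℂ)‖ ≤ |a| + |b| := Complex.norm_le_abs_re_add_abs_im _
      _ < q₀ := by linarith
  set p₁ : ℂ := ⟨-q₀ / 4, q₀ / 4⟩ with hp₁  -- upper-left
  set p₂ : ℂ := ⟨q₀ / 4, q₀ / 4⟩ with hp₂   -- upper-right
  set p₃ : ℂ := ⟨q₀ / 4, -q₀ / 4⟩ with hp₃  -- lower-right
  set p₄ : ℂ := ⟨-q₀ / 4, -q₀ / 4⟩ with hp₄ -- lower-left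
  have habs : |q₀ / 4| < q₀ / 2 := by rw [abs_of_pos (by linarith)]; linarith
  have habs' : |(-q₀ / 4)| < q₀ / 2 := by
    rw [show (-q₀ / 4 : ℝ) = -(q₀ / 4) by ring, abs_neg]; exact habs
  have hp₁D : p₁ ∈ D := hmem _ _ habs' habs
  have hp₂D : p₂ ∈ D := hmem _ _ habs habs
  have hp₃D : p₃ ∈ D := hmem _ _ habs habs'
  have hp₄D : p₄ ∈ D := hmem _ _ habs' habs'
  -- Step A : h = Gm on Up
  have stepA : EqOn h Gm Up := by
    apply AnalyticOnNhd.eqOn_of_preconnected_of_eventuallyEq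
      (hAnaD.mono (inter_subset_right)) (hGana _ _ (fun z hz => Or.inr (ne_of_gt hz.1))) hUpConn
      (show p₁ ∈ Up from ⟨show (0:ℝ) < q₀ / 4 by linarith, hp₁D⟩)
    have hopen : IsOpen ({z : ℂ | z.re < 0} ∩ Up) :=
      (isOpen_lt Complex.continuous_re continuous_const).inter hUpOpen
    have hp : p₁ ∈ {z : ℂ | z.re < 0} ∩ Up :=
      ⟨show (-q₀ / 4 : ℝ) < 0 by linarith, show (0:ℝ) < q₀ / 4 by linarith, hp₁D⟩
    filter_upwards [hopen.mem_nhds hp] with z hz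
    rw [hval z hz.1, keyU z hz.2.1]
  -- Step B : h = Gp on Lo
  have stepB : EqOn h Gp Lo := by
    apply AnalyticOnNhd.eqOn_of_preconnected_of_eventuallyEq
      (hAnaD.mono (inter_subset_right)) (hGana _ _ (fun z hz => Or.inr (ne_of_lt hz.1))) hLoConn
      (show p₄ ∈ Lo from ⟨show (-q₀ / 4 : ℝ) < 0 by linarith, hp₄D⟩)
    have hopen : IsOpen ({z : ℂ | z.re < 0} ∩ Lo) :=
      (isOpen_lt Complex.continuous_re continuous_const).inter hLoOpen
    have hp : p₄ ∈ {z : ℂ | z.re < 0} ∩ Lo :=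
      ⟨show (-q₀ / 4 : ℝ) < 0 by linarith, show (-q₀ / 4 : ℝ) < 0 by linarith, hp₄D⟩
    filter_upwards [hopen.mem_nhds hp] with z hz
    rw [hval z hz.1, keyL z hz.2.1]
  -- Step C : h = Gm on Ri
  have stepC : EqOn h Gm Ri := by
    apply AnalyticOnNhd.eqOn_of_preconnected_of_eventuallyEq
      (hAnaD.mono (inter_subset_right)) (hGana _ _ (fun z hz => Or.inl hz.1)) hRiConn
      (show p₂ ∈ Ri from ⟨show (0:ℝ) < q₀ / 4 by linarith, hp₂D⟩)
    have hp : p₂ ∈ Up := ⟨show (0:ℝ) < q₀ / 4 by linarith, hp₂D⟩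
    filter_upwards [hUpOpen.mem_nhds hp] with z hz
    exact stepA hz
  -- contradiction at p₃
  have h₃Ri : p₃ ∈ Ri := ⟨show (0:ℝ) < q₀ / 4 by linarith, hp₃D⟩
  have h₃Lo : p₃ ∈ Lo := ⟨show (-q₀ / 4 : ℝ) < 0 by linarith, hp₃D⟩
  have heq : Gm p₃ = Gp p₃ := (stepC h₃Ri).symm.trans (stepB h₃Lo)
  have hp₃ne : p₃ ≠ 0 := by
    intro h0
    have : (q₀ / 4 : ℝ) = 0 := congrArg Complex.re h0
    linarith
  have hpow : p₃ ^ c ≠ 0 := by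
    rw [Complex.cpow_def_of_ne_zero hp₃ne]; exact Complex.exp_ne_zero _
  have hexp : Complex.exp (-(Real.pi * I * c)) = Complex.exp (Real.pi * I * c) :=
    mul_left_cancel₀ hpow heq
  rw [Complex.exp_eq_exp_iff_exists_int] at hexp
  obtain ⟨n, hn⟩ := hexp
  -- derive c = -n, with c real in (0,1)
  have hπI : (Real.pi : ℂ) * I ≠ 0 := by
    simp [Complex.I_ne_zero, Real.pi_ne_zero]
  have hcn : c = -n := by
    have h2 : -(Real.pi * I * c) - Real.pi * I * c = n * (2 * Real.pi * I) := by
      linear_combination hn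
    have : (Real.pi * I) * (-2 * c) = (Real.pi * I) * (2 * n) := by linear_combination h2
    have := mul_left_cancel₀ hπI this
    linear_combination -this / 2
  have hre : (α⁻¹ : ℝ) = -(n : ℝ) := by
    have h' : ((1 / α : ℝ) : ℂ).re = (-(n : ℤ) : ℂ).re := by rw [← hc, hcn]
    simpa [one_div] using h'
  have h0 : (0 : ℝ) < α⁻¹ := by positivity
  have h1 : (α⁻¹ : ℝ) < 1 := by
    rw [inv_lt_one_iff₀]; right; linarith
  have : (0 : ℝ) < -(n : ℝ) := hre ▸ h0
  have hn1 : (1 : ℝ) ≤ -(n : ℝ) := by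
    have : (1 : ℤ) ≤ -n := by exact_mod_cast (by exact_mod_cast this : (0:ℤ) < -n)
    exact_mod_cast this
  linarith
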